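/- Let G be a graph with maximum degree Δ ≥ 3 and suppose G contains an induced subgraph D isomorphic to K_{Δ+1} minus an edge xy, where x, y are the nonadjacent pair in D. If G − D admits a proper Δ-coloring, then G admits a proper Δ-coloring. -/

import Mathlib

open SimpleGraph

theorem extend_coloring_almost_clique {V : Type*} [Fintype V] [DecidableEq V]
    (G : SimpleGraph V) [DecidableRel G.Adj] (Δ : ℕ)
    (hΔ : G.maxDegree = Δ) (hΔ3 : 3 ≤ Δ)
    (s : Finset V) (hcard : s.card = Δ + 1)
    (x y : V) (hx : x ∈ s) (hy : y ∈ s) (hxy : x ≠ y)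
    (hnadj : ¬ G.Adj x y)
    (hadj : ∀ a ∈ s, ∀ b ∈ s, a ≠ b →
      ¬ (a = x ∧ b = y) → ¬ (a = y ∧ b = x) → G.Adj a b)
    (hcol : (G.induce ((↑s : Set V)ᶜ)).Colorable Δ) :
    G.Colorable Δ := by
  classical
  obtain ⟨C⟩ := hcol
  set t : Finset V := (s.erase x).erase y with ht
  have htmem : ∀ v, v ∈ t ↔ v ∈ s ∧ v ≠ x ∧ v ≠ y := by
    intro v
    simp only [ht, Finset.mem_erase]
    tauto
  have htcard : t.card = Δ - 1 := by
    have hymem : y ∈ s.erase x := Finset.mem_erase.mpr ⟨hxy.symm, hy⟩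
    rw [ht, Finset.card_erase_of_mem hymem, Finset.card_erase_of_mem hx, hcard]
    omega
  -- vertices in t have no neighbors outside s
  have hinner : ∀ v ∈ t, ∀ w, G.Adj v w → w ∈ s := by
    intro v hv w hw
    obtain ⟨hvs, hvx, hvy⟩ := (htmem v).mp hv
    by_contra hws
    have hsub : insert w (s.erase v) ⊆ G.neighborFinset v := by
      intro u hu
      rw [Finset.mem_insert] at hu
      rcases hu with rfl | hu
      · simpa [SimpleGraph.mem_neighborFinset] using hw
      · rw [Finset.mem_erase] at hu
        rw [SimpleGraph.mem_neighborFinset]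
        exact hadj v hvs u hu.2 hu.1.symm (fun h => hvx h.1) (fun h => hvy h.1)
    have hc1 : (insert w (s.erase v)).card = Δ + 1 := by
      rw [Finset.card_insert_of_notMem (fun h => hws (Finset.mem_of_mem_erase h)),
        Finset.card_erase_of_mem hvs, hcard]
      omega
    have hc2 := Finset.card_le_card hsub
    have hc3 := G.degree_le_maxDegree v
    rw [hΔ] at hc3
    rw [← SimpleGraph.card_neighborFinset_eq_degree] at hc3
    omega
  -- x and y have at most one neighbor outside s
  have hout : ∀ z, z ∈ s → (∀ u ∈ t, G.Adj z u) → (G.neighborFinset z \ s).card ≤ 1 := by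
    intro z hzs hzt
    have h1 : t ⊆ G.neighborFinset z ∩ s := by
      intro u hu
      rw [Finset.mem_inter, SimpleGraph.mem_neighborFinset]
      exact ⟨hzt u hu, ((htmem u).mp hu).1⟩
    have h2 : (G.neighborFinset z ∩ s).card + (G.neighborFinset z \ s).card
        = (G.neighborFinset z).card := Finset.card_inter_add_card_sdiff _ _
    have h3 := Finset.card_le_card h1
    have h4 := G.degree_le_maxDegree z
    rw [hΔ, ← SimpleGraph.card_neighborFinset_eq_degree] at h4
    omega
  have hadjxt : ∀ u ∈ t, G.Adj x u := by
    intro u hu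
    obtain ⟨hus, hux, huy⟩ := (htmem u).mp hu
    exact hadj x hx u hus (Ne.symm hux) (fun h => huy h.2) (fun h => hxy h.1)
  have hadjyt : ∀ u ∈ t, G.Adj y u := by
    intro u hu
    obtain ⟨hus, hux, huy⟩ := (htmem u).mp hu
    exact hadj y hy u hus (Ne.symm huy) (fun h => hxy.symm h.1) (fun h => hux h.2)
  have houtx := hout x hx hadjxt
  have houty := hout y hy hadjyt
  -- colors of outside vertices
  have hne : ∀ v, v ∉ s → (v ∈ ((↑s : Set V)ᶜ)) := by
    intro v hv; simpa using hv
  let c' : V → Fin Δ := fun v =>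
    if h : v ∈ ((↑s : Set V)ᶜ) then C ⟨v, h⟩ else ⟨0, by omega⟩
  let F : Finset (Fin Δ) :=
    ((G.neighborFinset x \ s) ∪ (G.neighborFinset y \ s)).image c'
  have hFcard : F.card ≤ 2 := by
    calc F.card ≤ ((G.neighborFinset x \ s) ∪ (G.neighborFinset y \ s)).card :=
          Finset.card_image_le
      _ ≤ (G.neighborFinset x \ s).card + (G.neighborFinset y \ s).card :=
          Finset.card_union_le _ _
      _ ≤ 2 := by omega
  have hFc : (Fᶜ).Nonempty := by
    rw [← Finset.card_pos, Finset.card_compl, Fintype.card_fin]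
    omega
  obtain ⟨c0, hc0⟩ := hFc
  rw [Finset.mem_compl] at hc0
  -- bijection between t and the other colors
  have hecard : t.card = ((Finset.univ : Finset (Fin Δ)).erase c0).card := by
    rw [htcard, Finset.card_erase_of_mem (Finset.mem_univ _), Finset.card_univ,
      Fintype.card_fin]
  let e := Finset.equivOfCardEq hecard
  have he : ∀ v (h : v ∈ t), (e ⟨v, h⟩ : Fin Δ) ≠ c0 := by
    intro v h
    have := (e ⟨v, h⟩).2
    rw [Finset.mem_erase] at this
    exact this.1
  let f : V → Fin Δ := fun v =>
    if v = x ∨ v = y then c0 else if h : v ∈ t then (e ⟨v, h⟩ : Fin Δ) else c' v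
  have hfs : ∀ v, v ∉ s → f v = c' v := by
    intro v hv
    have hvx : ¬ (v = x ∨ v = y) := by rintro (rfl | rfl) <;> [exact hv hx; exact hv hy]
    have hvt : v ∉ t := fun h => hv ((htmem v).mp h).1
    simp only [f, if_neg hvx, dif_neg hvt]
  -- the color of an outside neighbor of x or y is in F
  have hFmem : ∀ z v, z = x ∨ z = y → G.Adj z v → v ∉ s → c' v ∈ F := by
    intro z v hz hzv hvs
    apply Finset.mem_image_of_mem
    rw [Finset.mem_union]
    rcases hz with rfl | rfl
    · exact Or.inl (Finset.mem_sdiff.mpr ⟨(SimpleGraph.mem_neighborFinset _ _ _).mpr hzv, hvs⟩)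
    · exact Or.inr (Finset.mem_sdiff.mpr ⟨(SimpleGraph.mem_neighborFinset _ _ _).mpr hzv, hvs⟩)
  -- main case analysis
  have key : ∀ a b, G.Adj a b → f a ≠ f b := by
    have main : ∀ a b, G.Adj a b → (a = x ∨ a = y) → f a ≠ f b := by
      intro a b hab ha
      have hbx : ¬ (b = x ∨ b = y) := by
        rintro (rfl | rfl) <;> rcases ha with rfl | rfl
        · exact G.loopless.irrefl _ hab
        · exact hnadj hab.symm
        · exact hnadj hab
        · exact G.loopless.irrefl _ hab
      have hfa : f a = c0 := by simp only [f, if_pos ha]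
      rw [hfa]
      by_cases hbt : b ∈ t
      · have : f b = (e ⟨b, hbt⟩ : Fin Δ) := by simp only [f, if_neg hbx, dif_pos hbt]
        rw [this]
        exact (he b hbt).symm
      · have hbs : b ∉ s := by
          intro hbs
          exact hbt ((htmem b).mpr ⟨hbs, fun h => hbx (Or.inl h), fun h => hbx (Or.inr h)⟩)
        rw [hfs b hbs]
        intro hcontra
        exact hc0 (hcontra ▸ hFmem a b ha hab hbs)
    intro a b hab
    by_cases ha : a = x ∨ a = y
    · exact main a b hab ha
    by_cases hb : b = x ∨ b = y
    · exact fun h => main b a hab.symm hb h.symm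
    by_cases hat : a ∈ t
    · have hfa : f a = (e ⟨a, hat⟩ : Fin Δ) := by simp only [f, if_neg ha, dif_pos hat]
      by_cases hbt : b ∈ t
      · have hfb : f b = (e ⟨b, hbt⟩ : Fin Δ) := by simp only [f, if_neg hb, dif_pos hbt]
        rw [hfa, hfb]
        intro hcontra
        have : (⟨a, hat⟩ : {v // v ∈ t}) = ⟨b, hbt⟩ :=
          e.injective (Subtype.ext hcontra)
        exact hab.ne (congrArg Subtype.val this)
      · have hbs : b ∉ s := fun hbs =>
          hbt ((htmem b).mpr ⟨hbs, fun h => hb (Or.inl h), fun h => hb (Or.inr h)⟩)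
        exact absurd (hinner a hat b hab) hbs
    · have has : a ∉ s := fun has =>
        hat ((htmem a).mpr ⟨has, fun h => ha (Or.inl h), fun h => ha (Or.inr h)⟩)
      by_cases hbt : b ∈ t
      · exact absurd (hinner b hbt a hab.symm) has
      · have hbs : b ∉ s := fun hbs =>
          hbt ((htmem b).mpr ⟨hbs, fun h => hb (Or.inl h), fun h => hb (Or.inr h)⟩)
        rw [hfs a has, hfs b hbs]
        have hac : a ∈ ((↑s : Set V)ᶜ) := hne a has
        have hbc : b ∈ ((↑s : Set V)ᶜ) := hne b hbs
        have : c' a = C ⟨a, hac⟩ := by simp only [c', dif_pos hac]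
        rw [this]
        have : c' b = C ⟨b, hbc⟩ := by simp only [c', dif_pos hbc]
        rw [this]
        exact C.valid (by simpa using hab)
  exact ⟨SimpleGraph.Coloring.mk f (fun hab => key _ _ hab)⟩
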